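/- arXiv:1506.00910 — 2 statements merged into one kernel-verified Lean document; each statement's English description precedes it below -/
import Mathlib

section
/- Let V₀ and H₀ be real Hilbert spaces with V₀ continuously and densely embedded in H₀, let I ⊆ ℝ be an interval, let J₁ ∈ C¹(V₀) be such that its Fréchet derivative J₁' : V₀ → H₀ is locally Lipschitz, and let w ∈ C(I; V₀) ∩ C¹(I; H₀). Then J₁ ∘ w ∈ C¹(I) and (J₁ ∘ w)'(t) = (J₁'(w(t)), w'(t))_{H₀} for all t ∈ I. -/
/-- Abstract chain rule: if `V₀ ↪ H₀` densely, `J₁ ∈ C¹(V₀)` with Fréchet derivative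
represented by a locally Lipschitz gradient `g : V₀ → H₀`, and
`w ∈ C(I;V₀) ∩ C¹(I;H₀)`, then `J₁ ∘ w ∈ C¹(I)` with `(J₁∘w)' = (g(w), w')_{H₀}`. -/
theorem abstract_chain_rule {V H : Type*}
    [NormedAddCommGroup V] [InnerProductSpace ℝ V] [CompleteSpace V]
    [NormedAddCommGroup H] [InnerProductSpace ℝ H] [CompleteSpace H]
    (ι : V →L[ℝ] H) (hinj : Function.Injective ι) (hdense : DenseRange ι)
    (J : V → ℝ) (g : V → H)
    (hJ : ∀ v : V, HasFDerivAt J (((innerSL ℝ (g v)).comp ι : V →L[ℝ] ℝ)) v)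
    (hg : LocallyLipschitz g)
    (I : Set ℝ) (hI : I.OrdConnected)
    (w : ℝ → V) (w' : ℝ → H)
    (hw : ContinuousOn w I)
    (hw' : ∀ t ∈ I, HasDerivWithinAt (fun s => ι (w s)) (w' t) I t)
    (hw'c : ContinuousOn w' I) :
    (∀ t ∈ I, HasDerivWithinAt (fun s => J (w s)) (inner ℝ (g (w t)) (w' t) : ℝ) I t) ∧
    ContinuousOn (fun t => (inner ℝ (g (w t)) (w' t) : ℝ)) I := by
  constructor
  · intro t ht
    obtain ⟨K, U, hU, hKU⟩ := hg (w t)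
    obtain ⟨r, hr, hball⟩ := Metric.mem_nhds_iff.mp hU
    set a := w t with ha
    -- key mean value estimate
    have key : ∀ v ∈ Metric.ball a r,
        |J v - J a - inner ℝ (g a) (ι v - ι a)| ≤ (K * ‖v - a‖) * ‖ι v - ι a‖ := by
      intro v hv
      set d := v - a with hd
      have hconv : Convex ℝ (Metric.ball a r) := convex_ball a r
      have hmem : ∀ θ ∈ Set.Icc (0:ℝ) 1, a + θ • d ∈ Metric.ball a r := fun θ hθ =>
        hconv.add_smul_sub_mem (Metric.mem_ball_self hr) hv hθ
      set f : ℝ → ℝ := fun θ => J (a + θ • d) - θ * inner ℝ (g a) (ι d) with hf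
      set f' : ℝ → ℝ := fun θ => (inner ℝ (g (a + θ • d)) (ι d) : ℝ) - inner ℝ (g a) (ι d) with hf'
      have hderiv : ∀ θ ∈ Set.Icc (0:ℝ) 1, HasDerivWithinAt f (f' θ) (Set.Icc 0 1) θ := by
        intro θ _
        have hc : HasDerivAt (fun θ : ℝ => a + θ • d) d θ := by
          simpa using ((hasDerivAt_id θ).smul_const d).const_add a
        have h1 : HasDerivAt (fun θ : ℝ => J (a + θ • d))
            ((inner ℝ (g (a + θ • d)) (ι d) : ℝ)) θ := by
          simpa [Function.comp_def] using (hJ (a + θ • d)).comp_hasDerivAt θ hc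
        have h2 : HasDerivAt (fun θ : ℝ => θ * inner ℝ (g a) (ι d))
            ((inner ℝ (g a) (ι d) : ℝ)) θ := by
          simpa using (hasDerivAt_id θ).mul_const (inner ℝ (g a) (ι d) : ℝ)
        exact (h1.sub h2).hasDerivWithinAt
      have hbound : ∀ θ ∈ Set.Icc (0:ℝ) 1, ‖f' θ‖ ≤ (K * ‖d‖) * ‖ι d‖ := by
        intro θ hθ
        have h1 : f' θ = (inner ℝ (g (a + θ • d) - g a) (ι d) : ℝ) := by
          rw [hf', inner_sub_left]
        rw [h1]
        calc ‖(inner ℝ (g (a + θ • d) - g a) (ι d) : ℝ)‖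
            ≤ ‖g (a + θ • d) - g a‖ * ‖ι d‖ := norm_inner_le_norm _ _
          _ ≤ (K * ‖d‖) * ‖ι d‖ := by
              apply mul_le_mul_of_nonneg_right _ (norm_nonneg _)
              have hdist : dist (g (a + θ • d)) (g a) ≤ K * dist (a + θ • d) a :=
                hKU.dist_le_mul _ (hball (hmem θ hθ)) _ (hball (Metric.mem_ball_self hr))
              rw [dist_eq_norm, dist_eq_norm] at hdist
              refine hdist.trans ?_
              have : ‖a + θ • d - a‖ = |θ| * ‖d‖ := by
                simp [norm_smul, abs_of_nonneg hθ.1]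
              rw [this]
              have hθ1 : |θ| ≤ 1 := by
                rw [abs_of_nonneg hθ.1]; exact hθ.2
              have := mul_le_mul_of_nonneg_right hθ1 (norm_nonneg d)
              nlinarith [norm_nonneg d, K.coe_nonneg]
      have hmv := (convex_Icc (0:ℝ) 1).norm_image_sub_le_of_norm_hasDerivWithin_le
        hderiv hbound (Set.left_mem_Icc.mpr zero_le_one) (Set.right_mem_Icc.mpr zero_le_one)
      have hfv : f 1 - f 0 = J v - J a - inner ℝ (g a) (ι v - ι a) := by
        simp only [hf, one_smul, zero_smul, add_zero, one_mul, zero_mul, sub_zero, hd, map_sub]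
        rw [show a + (v - a) = v from by abel]
        ring
      have : ‖f 1 - f 0‖ ≤ (K * ‖d‖) * ‖ι d‖ * ‖(1:ℝ) - 0‖ := hmv
      rw [hfv] at this
      simpa [hd, map_sub] using this
    -- main part has the derivative
    have hmain : HasDerivWithinAt (fun s => (inner ℝ (g a) (ι (w s)) : ℝ))
        ((inner ℝ (g a) (w' t) : ℝ)) I t := by
      simpa [Function.comp_def] using ((innerSL ℝ (g a)).hasFDerivAt.comp_hasDerivWithinAt t (hw' t ht))
    -- error part has derivative zero
    have herr : HasDerivWithinAt (fun s => J (w s) - (inner ℝ (g a) (ι (w s)) : ℝ)) 0 I t := by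
      rw [hasDerivWithinAt_iff_isLittleO]
      have hBO : (fun s => ι (w s) - ι (w t)) =O[nhdsWithin t I] (fun s => s - t) :=
        (hw' t ht).hasFDerivWithinAt.isBigO_sub
      have h1 : Filter.Tendsto (fun s => w s - w t) (nhdsWithin t I) (nhds 0) := by
        have h0 : Filter.Tendsto w (nhdsWithin t I) (nhds (w t)) := hw t ht
        simpa using h0.sub (tendsto_const_nhds (x := w t))
      have hc : Filter.Tendsto (fun s => (K:ℝ) * ‖w s - w t‖) (nhdsWithin t I) (nhds 0) := by
        simpa using h1.norm.const_mul (K:ℝ)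
      have hlittle : (fun s => (K:ℝ) * ‖w s - w t‖) =o[nhdsWithin t I] (fun _ => (1:ℝ)) :=
        (Asymptotics.isLittleO_one_iff ℝ).mpr hc
      have hprod : (fun s => ((K:ℝ) * ‖w s - w t‖) * ‖ι (w s) - ι (w t)‖)
          =o[nhdsWithin t I] (fun s => s - t) := by
        simpa using hlittle.mul_isBigO hBO.norm_left
      have hev : ∀ᶠ s in nhdsWithin t I,
          ‖(J (w s) - (inner ℝ (g a) (ι (w s)) : ℝ)) - (J (w t) - (inner ℝ (g a) (ι (w t)) : ℝ))‖
            ≤ 1 * ‖((K:ℝ) * ‖w s - w t‖) * ‖ι (w s) - ι (w t)‖‖ := by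
        have hball' : ∀ᶠ s in nhdsWithin t I, w s ∈ Metric.ball a r :=
          (hw t ht) (Metric.ball_mem_nhds a hr)
        filter_upwards [hball'] with s hs
        rw [one_mul]
        have := key (w s) hs
        have heq : (J (w s) - (inner ℝ (g a) (ι (w s)) : ℝ))
            - (J (w t) - (inner ℝ (g a) (ι (w t)) : ℝ))
            = J (w s) - J a - inner ℝ (g a) (ι (w s) - ι a) := by
          rw [inner_sub_right]; rw [← ha]; ring
        rw [Real.norm_eq_abs, heq]
        exact this.trans (le_abs_self _)
      have hfinal := (Asymptotics.IsBigO.of_bound 1 hev).trans_isLittleO hprod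
      simpa [ha] using hfinal
    have := herr.add hmain
    simpa [ha, Pi.add_def] using this
  · have hgc : ContinuousOn (fun t => g (w t)) I := hg.continuous.comp_continuousOn hw
    exact hgc.inner hw'c
end

section
/- Let ρ ∈ (1, ∞) and let u : ℝⁿ → ℂ be a C² function with compact support. Then Re ∫ −Δu · |u|^{ρ−2} ū dx ≥ 0. -/
open MeasureTheory Complex

/-- Termwise algebraic inequality. -/
lemma key_ineq (ρ ε S v m : ℝ) (hρ : 1 < ρ) (hε : 0 < ε) (hS : 0 ≤ S)
    (hm : 0 ≤ m) (hvm : v ^ 2 ≤ S * m) :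
    0 ≤ (ρ - 2) * (S + ε) ^ ((ρ - 2) / 2 - 1) * v ^ 2
      + (S + ε) ^ ((ρ - 2) / 2) * m := by
  set p := (ρ - 2) / 2 with hp
  have hpos : (0:ℝ) < S + ε := by linarith
  have h1 : (0:ℝ) < (S + ε) ^ (p - 1) := Real.rpow_pos_of_pos hpos _
  have h2 : (S + ε) ^ p = (S + ε) ^ (p - 1) * (S + ε) := by
    rw [← Real.rpow_add_one hpos.ne' (p - 1)]; ring_nf
  rcases le_or_gt 2 ρ with h | h
  · have hh1 : 0 ≤ (ρ - 2) * (S + ε) ^ (p - 1) * v ^ 2 :=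
      mul_nonneg (mul_nonneg (by linarith) h1.le) (sq_nonneg v)
    have hh2 : 0 ≤ (S + ε) ^ p * m := mul_nonneg (Real.rpow_pos_of_pos hpos p).le hm
    linarith
  · -- ρ < 2 : use v² ≤ S m ≤ (S+ε) m
    have hvm' : v ^ 2 ≤ (S + ε) * m := le_trans hvm (by nlinarith)
    have key : (ρ - 2) * (S + ε) ^ (p - 1) * v ^ 2
        ≥ (ρ - 2) * (S + ε) ^ (p - 1) * ((S + ε) * m) := by
      have hneg : ρ - 2 < 0 := by linarith
      nlinarith [mul_le_mul_of_nonneg_left hvm' h1.le]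
    have : (ρ - 2) * (S + ε) ^ (p - 1) * ((S + ε) * m) = (ρ - 2) * ((S + ε) ^ p * m) := by
      rw [h2]; ring
    nlinarith [Real.rpow_pos_of_pos hpos p, mul_nonneg (Real.rpow_pos_of_pos hpos p).le hm]

variable {n : ℕ}

/-- The regularized multiplier `φ_ε = (|u|² + ε)^{(ρ−2)/2} ū`. -/
noncomputable def phiR (ρ ε : ℝ) (u : EuclideanSpace ℝ (Fin n) → ℂ)
    (x : EuclideanSpace ℝ (Fin n)) : ℂ :=
  (((Complex.normSq (u x) + ε) ^ ((ρ - 2) / 2) : ℝ) : ℂ) * (starRingEnd ℂ) (u x)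

lemma hasFDerivAt_phiR (ρ ε : ℝ) (hε : 0 < ε) (u : EuclideanSpace ℝ (Fin n) → ℂ)
    (hu : Differentiable ℝ u) (x : EuclideanSpace ℝ (Fin n)) :
    HasFDerivAt (phiR ρ ε u)
      ((((Complex.normSq (u x) + ε) ^ ((ρ - 2) / 2) : ℝ) : ℂ) •
          ((Complex.conjCLE : ℂ →L[ℝ] ℂ).comp (fderiv ℝ u x))
        + ((starRingEnd ℂ) (u x)) •
          (Complex.ofRealCLM.comp
            ((((ρ - 2) / 2) * (Complex.normSq (u x) + ε) ^ ((ρ - 2) / 2 - 1)) •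
              (((u x).re • (Complex.reCLM.comp (fderiv ℝ u x))
                + (u x).re • (Complex.reCLM.comp (fderiv ℝ u x)))
               + ((u x).im • (Complex.imCLM.comp (fderiv ℝ u x))
                + (u x).im • (Complex.imCLM.comp (fderiv ℝ u x))))))) x := by
  set p := (ρ - 2) / 2 with hp
  have hL : HasFDerivAt u (fderiv ℝ u x) x := (hu x).hasFDerivAt
  have hre : HasFDerivAt (fun y => (u y).re) (Complex.reCLM.comp (fderiv ℝ u x)) x :=
    Complex.reCLM.hasFDerivAt.comp x hL
  have him : HasFDerivAt (fun y => (u y).im) (Complex.imCLM.comp (fderiv ℝ u x)) x :=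
    Complex.imCLM.hasFDerivAt.comp x hL
  have hS : HasFDerivAt (fun y => Complex.normSq (u y))
      (((u x).re • (Complex.reCLM.comp (fderiv ℝ u x))
        + (u x).re • (Complex.reCLM.comp (fderiv ℝ u x)))
       + ((u x).im • (Complex.imCLM.comp (fderiv ℝ u x))
        + (u x).im • (Complex.imCLM.comp (fderiv ℝ u x)))) x := by
    simp only [Complex.normSq_apply]
    exact (hre.mul hre).add (him.mul him)
  have hpos : 0 < Complex.normSq (u x) + ε := add_pos_of_nonneg_of_pos (Complex.normSq_nonneg _) hε
  have hq : HasDerivAt (fun t : ℝ => (t + ε) ^ p)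
      (p * (Complex.normSq (u x) + ε) ^ (p - 1)) (Complex.normSq (u x)) := by
    have h1 := Real.hasDerivAt_rpow_const (x := Complex.normSq (u x) + ε) (p := p)
      (Or.inl hpos.ne')
    have h2 : HasDerivAt (fun t : ℝ => t + ε) 1 (Complex.normSq (u x)) :=
      (hasDerivAt_id _).add_const ε
    simpa [Function.comp_def] using h1.comp (Complex.normSq (u x)) h2
  have hqS : HasFDerivAt (fun y => ((Complex.normSq (u y) + ε) ^ p : ℝ))
      ((p * (Complex.normSq (u x) + ε) ^ (p - 1)) •
        (((u x).re • (Complex.reCLM.comp (fderiv ℝ u x))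
          + (u x).re • (Complex.reCLM.comp (fderiv ℝ u x)))
         + ((u x).im • (Complex.imCLM.comp (fderiv ℝ u x))
          + (u x).im • (Complex.imCLM.comp (fderiv ℝ u x))))) x :=
    by simpa [Function.comp_def] using hq.comp_hasFDerivAt x hS
  have hof : HasFDerivAt (fun y => (((Complex.normSq (u y) + ε) ^ p : ℝ) : ℂ))
      (Complex.ofRealCLM.comp
        ((p * (Complex.normSq (u x) + ε) ^ (p - 1)) •
          (((u x).re • (Complex.reCLM.comp (fderiv ℝ u x))
            + (u x).re • (Complex.reCLM.comp (fderiv ℝ u x)))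
           + ((u x).im • (Complex.imCLM.comp (fderiv ℝ u x))
            + (u x).im • (Complex.imCLM.comp (fderiv ℝ u x)))))) x :=
    Complex.ofRealCLM.hasFDerivAt.comp x hqS
  have hconj : HasFDerivAt (fun y => (starRingEnd ℂ) (u y))
      ((Complex.conjCLE : ℂ →L[ℝ] ℂ).comp (fderiv ℝ u x)) x := by
    exact (Complex.conjCLE : ℂ →L[ℝ] ℂ).hasFDerivAt.comp x hL
  exact hof.mul hconj

lemma differentiable_phiR (ρ ε : ℝ) (hε : 0 < ε) (u : EuclideanSpace ℝ (Fin n) → ℂ)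
    (hu : Differentiable ℝ u) : Differentiable ℝ (phiR ρ ε u) :=
  fun x => (hasFDerivAt_phiR ρ ε hε u hu x).differentiableAt

lemma fderiv_phiR_apply (ρ ε : ℝ) (hε : 0 < ε) (u : EuclideanSpace ℝ (Fin n) → ℂ)
    (hu : Differentiable ℝ u) (x w : EuclideanSpace ℝ (Fin n)) :
    fderiv ℝ (phiR ρ ε u) x w
      = (((Complex.normSq (u x) + ε) ^ ((ρ - 2) / 2) : ℝ) : ℂ)
          * (starRingEnd ℂ) (fderiv ℝ u x w)
        + ((((ρ - 2) * (Complex.normSq (u x) + ε) ^ ((ρ - 2) / 2 - 1)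
              * ((u x).re * (fderiv ℝ u x w).re + (u x).im * (fderiv ℝ u x w).im)) : ℝ) : ℂ)
          * (starRingEnd ℂ) (u x) := by
  rw [(hasFDerivAt_phiR ρ ε hε u hu x).fderiv]
  simp only [ContinuousLinearMap.add_apply, ContinuousLinearMap.smul_apply,
    ContinuousLinearMap.comp_apply, ContinuousLinearMap.coe_coe, Complex.conjCLE_apply,
    Complex.ofRealCLM_apply, smul_eq_mul, Complex.reCLM_apply, Complex.imCLM_apply]
  simp only [ContinuousLinearEquiv.coe_coe, Complex.conjCLE_apply]
  push_cast
  ring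

lemma continuous_fderiv_phiR_apply (ρ ε : ℝ) (hε : 0 < ε)
    (u : EuclideanSpace ℝ (Fin n) → ℂ) (hu : ContDiff ℝ 2 u)
    (w : EuclideanSpace ℝ (Fin n)) :
    Continuous (fun x => fderiv ℝ (phiR ρ ε u) x w) := by
  have hud : Differentiable ℝ u := hu.differentiable (by norm_num)
  have hcd : Continuous (fun x => fderiv ℝ u x w) := by
    have : ContDiff ℝ 1 (fderiv ℝ u) := hu.fderiv_right (by norm_num)
    exact this.continuous.clm_apply continuous_const
  have hcu : Continuous u := hu.continuous
  have hS : Continuous (fun x => Complex.normSq (u x)) :=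
    Complex.continuous_normSq.comp hcu
  have hb : Continuous (fun x => Complex.normSq (u x) + ε) := hS.add continuous_const
  have hbne : ∀ x, Complex.normSq (u x) + ε ≠ 0 :=
    fun x => (add_pos_of_nonneg_of_pos (Complex.normSq_nonneg _) hε).ne'
  have h1 : Continuous (fun x => ((Complex.normSq (u x) + ε) ^ ((ρ - 2) / 2) : ℝ)) :=
    hb.rpow_const (fun x => Or.inl (hbne x))
  have h2 : Continuous (fun x => ((Complex.normSq (u x) + ε) ^ ((ρ - 2) / 2 - 1) : ℝ)) :=
    hb.rpow_const (fun x => Or.inl (hbne x))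
  have heq : (fun x => fderiv ℝ (phiR ρ ε u) x w)
      = fun x => (((Complex.normSq (u x) + ε) ^ ((ρ - 2) / 2) : ℝ) : ℂ)
          * (starRingEnd ℂ) (fderiv ℝ u x w)
        + ((((ρ - 2) * (Complex.normSq (u x) + ε) ^ ((ρ - 2) / 2 - 1)
              * ((u x).re * (fderiv ℝ u x w).re + (u x).im * (fderiv ℝ u x w).im)) : ℝ) : ℂ)
          * (starRingEnd ℂ) (u x) :=
    funext fun x => fderiv_phiR_apply ρ ε hε u hud x w
  rw [heq]
  have hc1 : Continuous (fun x => (starRingEnd ℂ) (fderiv ℝ u x w)) :=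
    Complex.continuous_conj.comp hcd
  have hc2 : Continuous (fun x => (starRingEnd ℂ) (u x)) := Complex.continuous_conj.comp hcu
  exact ((Complex.continuous_ofReal.comp h1).mul hc1).add
    ((Complex.continuous_ofReal.comp ((continuous_const.mul h2).mul
      (((Complex.continuous_re.comp hcu).mul (Complex.continuous_re.comp hcd)).add
        ((Complex.continuous_im.comp hcu).mul (Complex.continuous_im.comp hcd))))).mul hc2)

lemma hasCompactSupport_phiR (ρ ε : ℝ) (u : EuclideanSpace ℝ (Fin n) → ℂ)
    (hsupp : HasCompactSupport u) : HasCompactSupport (phiR ρ ε u) := by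
  have h : HasCompactSupport (fun x => (starRingEnd ℂ) (u x)) :=
    hsupp.comp_left (map_zero _)
  exact h.mul_left

/-- The pointwise real-part identity for `Re(∂φ_ε · ∂u)`. -/
lemma re_fderiv_phiR_mul (ρ ε : ℝ) (hε : 0 < ε) (u : EuclideanSpace ℝ (Fin n) → ℂ)
    (hu : Differentiable ℝ u) (x w : EuclideanSpace ℝ (Fin n)) :
    (fderiv ℝ (phiR ρ ε u) x w * fderiv ℝ u x w).re
      = (ρ - 2) * (Complex.normSq (u x) + ε) ^ ((ρ - 2) / 2 - 1)
          * ((starRingEnd ℂ) (u x) * fderiv ℝ u x w).re ^ 2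
        + (Complex.normSq (u x) + ε) ^ ((ρ - 2) / 2) * Complex.normSq (fderiv ℝ u x w) := by
  rw [fderiv_phiR_apply ρ ε hε u hu x w]
  simp only [Complex.add_re, Complex.add_im, Complex.mul_re, Complex.mul_im,
    Complex.ofReal_re, Complex.ofReal_im, Complex.conj_re, Complex.conj_im,
    Complex.normSq_apply]
  ring

/-- The Euclidean Laplacian of a function `u : ℝⁿ → ℂ`. -/
noncomputable def lap {n : ℕ} (u : EuclideanSpace ℝ (Fin n) → ℂ)
    (x : EuclideanSpace ℝ (Fin n)) : ℂ :=
  ∑ i : Fin n,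
    fderiv ℝ (fun y => fderiv ℝ u y (EuclideanSpace.single i (1:ℝ))) x
      (EuclideanSpace.single i (1:ℝ))

lemma step1 {n : ℕ} (ρ : ℝ) (hρ : 1 < ρ) (u : EuclideanSpace ℝ (Fin n) → ℂ)
    (hu : ContDiff ℝ 2 u) (hsupp : HasCompactSupport u) (ε : ℝ) (hε : 0 < ε) :
    0 ≤ (∫ x, (-(lap u x)) * phiR ρ ε u x).re := by
  set e : Fin n → EuclideanSpace ℝ (Fin n) := fun i => EuclideanSpace.single i (1:ℝ) with he
  set d : Fin n → EuclideanSpace ℝ (Fin n) → ℂ := fun i y => fderiv ℝ u y (e i) with hd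
  have hud : Differentiable ℝ u := hu.differentiable (by norm_num)
  have hdC1 : ∀ i, ContDiff ℝ 1 (d i) := fun i => by
    have h1 : ContDiff ℝ 1 (fderiv ℝ u) := hu.fderiv_right (by norm_num)
    exact (ContinuousLinearMap.apply ℝ ℂ (e i)).contDiff.comp h1
  have hdcont : ∀ i, Continuous (d i) := fun i => (hdC1 i).continuous
  have hddiff : ∀ i, Differentiable ℝ (d i) := fun i => (hdC1 i).differentiable one_ne_zero
  have hd'cont : ∀ i, Continuous (fun x => fderiv ℝ (d i) x (e i)) := fun i =>
    ((hdC1 i).continuous_fderiv one_ne_zero).clm_apply continuous_const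
  have hφdiff : Differentiable ℝ (phiR ρ ε u) := differentiable_phiR ρ ε hε u hud
  have hφcont : Continuous (phiR ρ ε u) := hφdiff.continuous
  have hφsupp : HasCompactSupport (phiR ρ ε u) := hasCompactSupport_phiR ρ ε u hsupp
  have hφ'cont : ∀ i : Fin n, Continuous (fun x => fderiv ℝ (phiR ρ ε u) x (e i)) := fun i =>
    continuous_fderiv_phiR_apply ρ ε hε u hu (e i)
  have hφ'supp : ∀ i : Fin n, HasCompactSupport (fun x => fderiv ℝ (phiR ρ ε u) x (e i)) := by
    intro i
    have h := hφsupp.fderiv ℝ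
    have := h.comp_left (g := fun L : EuclideanSpace ℝ (Fin n) →L[ℝ] ℂ => L (e i)) (by simp)
    exact this
  have I1 : ∀ i : Fin n,
      Integrable (fun x => phiR ρ ε u x * fderiv ℝ (d i) x (e i)) volume := fun i =>
    (hφcont.mul (hd'cont i)).integrable_of_hasCompactSupport hφsupp.mul_right
  have I2 : ∀ i : Fin n,
      Integrable (fun x => fderiv ℝ (phiR ρ ε u) x (e i) * d i x) volume := fun i =>
    ((hφ'cont i).mul (hdcont i)).integrable_of_hasCompactSupport (hφ'supp i).mul_right
  have I3 : ∀ i : Fin n, Integrable (fun x => phiR ρ ε u x * d i x) volume := fun i =>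
    (hφcont.mul (hdcont i)).integrable_of_hasCompactSupport hφsupp.mul_right
  have IBP : ∀ i : Fin n,
      (∫ x, phiR ρ ε u x * fderiv ℝ (d i) x (e i))
        = - ∫ x, fderiv ℝ (phiR ρ ε u) x (e i) * d i x := fun i =>
    integral_mul_fderiv_eq_neg_fderiv_mul_of_integrable (I2 i) (I1 i) (I3 i) (fun x _ => hφdiff x) (fun x _ => hddiff i x)
  have hsplit : (∫ x, (-(lap u x)) * phiR ρ ε u x)
      = ∑ i : Fin n, ∫ x, fderiv ℝ (phiR ρ ε u) x (e i) * d i x := by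
    have h1 : (fun x => (-(lap u x)) * phiR ρ ε u x)
        = fun x => ∑ i : Fin n, -(phiR ρ ε u x * fderiv ℝ (d i) x (e i)) := by
      funext x
      simp only [lap, ← he, hd]
      rw [← Finset.sum_neg_distrib, Finset.sum_mul]
      · congr 1; funext i; ring
    rw [h1, integral_finset_sum (f := fun i x => -(phiR ρ ε u x * (fderiv ℝ (d i) x) (e i))) _ (fun i _ => ((I1 i).neg : Integrable (fun x => -(phiR ρ ε u x * (fderiv ℝ (d i) x) (e i))) volume))]
    congr 1; funext i
    rw [integral_neg, IBP i, neg_neg]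
  have hre : (∫ x, (-(lap u x)) * phiR ρ ε u x).re
      = ∑ i : Fin n, ∫ x, (fderiv ℝ (phiR ρ ε u) x (e i) * d i x).re := by
    rw [hsplit, Complex.re_sum]
    congr 1; funext i
    rw [← RCLike.re_to_complex, ← integral_re (I2 i)]
    simp
  rw [hre, ← integral_finset_sum (f := fun i x => ((fderiv ℝ (phiR ρ ε u) x) (e i) * d i x).re) _ (fun i _ => by simpa using (I2 i).re)]
  apply integral_nonneg
  intro x
  simp only [Pi.zero_apply]
  have hpt : ∀ i : Fin n, (fderiv ℝ (phiR ρ ε u) x (e i) * d i x).re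
      = (ρ - 2) * (Complex.normSq (u x) + ε) ^ ((ρ - 2) / 2 - 1)
          * ((starRingEnd ℂ) (u x) * d i x).re ^ 2
        + (Complex.normSq (u x) + ε) ^ ((ρ - 2) / 2) * Complex.normSq (d i x) := fun i =>
    re_fderiv_phiR_mul ρ ε hε u hud x (e i)
  refine Finset.sum_nonneg (fun i _ => ?_)
  rw [hpt i]
  refine key_ineq ρ ε (Complex.normSq (u x)) _ _ hρ hε (Complex.normSq_nonneg _)
    (Complex.normSq_nonneg _) ?_
  have h1 : ((starRingEnd ℂ) (u x) * d i x).re ^ 2 ≤ Complex.normSq ((starRingEnd ℂ) (u x) * d i x) := by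
    rw [Complex.normSq_apply]; nlinarith [sq_nonneg (((starRingEnd ℂ) (u x) * d i x).im)]
  calc ((starRingEnd ℂ) (u x) * d i x).re ^ 2
      ≤ Complex.normSq ((starRingEnd ℂ) (u x) * d i x) := h1
    _ = Complex.normSq (u x) * Complex.normSq (d i x) := by
        rw [Complex.normSq_mul, Complex.normSq_conj]

/-- Accretivity of `−Δ` in `L^ρ`: `Re ∫ −Δu · |u|^{ρ−2} ū ≥ 0` for `u ∈ C²_c(ℝⁿ;ℂ)`. -/
theorem laplacian_accretive {n : ℕ} (ρ : ℝ) (hρ : 1 < ρ)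
    (u : EuclideanSpace ℝ (Fin n) → ℂ) (hu : ContDiff ℝ 2 u)
    (hsupp : HasCompactSupport u) :
    0 ≤ (∫ x, (-(lap u x)) * ((‖u x‖ ^ (ρ - 2) : ℝ) : ℂ)
        * (starRingEnd ℂ (u x))).re := by
  classical
  set p : ℝ := (ρ - 2) / 2 with hp
  have hud : Differentiable ℝ u := hu.differentiable (by norm_num)
  have hucont : Continuous u := hu.continuous
  -- continuity of the Laplacian
  have hlapcont : Continuous (lap u) := by
    apply continuous_finset_sum
    intro i _
    have hdC1 : ContDiff ℝ 1 (fun y => fderiv ℝ u y (EuclideanSpace.single i (1:ℝ))) := by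
      have h1 : ContDiff ℝ 1 (fderiv ℝ u) := hu.fderiv_right (by norm_num)
      exact (ContinuousLinearMap.apply ℝ ℂ (EuclideanSpace.single i (1:ℝ))).contDiff.comp h1
    exact (hdC1.continuous_fderiv one_ne_zero).clm_apply continuous_const
  set F : ℕ → EuclideanSpace ℝ (Fin n) → ℂ :=
    fun k x => (-(lap u x)) * phiR ρ (1 / ((k:ℝ) + 1)) u x with hF
  set f : EuclideanSpace ℝ (Fin n) → ℂ :=
    fun x => (-(lap u x)) * ((‖u x‖ ^ (ρ - 2) : ℝ) : ℂ)
        * (starRingEnd ℂ (u x)) with hf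
  have hεpos : ∀ k : ℕ, (0:ℝ) < 1 / ((k:ℝ) + 1) := fun k => by positivity
  have hεle : ∀ k : ℕ, (1:ℝ) / ((k:ℝ) + 1) ≤ 1 := fun k => by
    rw [div_le_one (by positivity)]; linarith [Nat.cast_nonneg (α := ℝ) k]
  -- the dominating function
  set B : EuclideanSpace ℝ (Fin n) → ℝ :=
    fun x => ‖lap u x‖ * ((Complex.normSq (u x) + 1) ^ p * ‖u x‖
      + ‖u x‖ ^ (ρ - 1)) with hB
  have hBcont : Continuous B := by
    have h1 : Continuous (fun x => ((Complex.normSq (u x) + 1 : ℝ)) ^ p) :=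
      ((Complex.continuous_normSq.comp hucont).add continuous_const).rpow_const
        (fun x => Or.inl (add_pos_of_nonneg_of_pos (Complex.normSq_nonneg _) one_pos).ne')
    have h2 : Continuous (fun x => ‖u x‖) := hucont.norm
    have h3 : Continuous (fun x => ‖u x‖ ^ (ρ - 1)) :=
      h2.rpow_const (fun x => Or.inr (by linarith))
    exact (hlapcont.norm).mul ((h1.mul h2).add h3)
  have hBsupp : HasCompactSupport B := by
    have h1 : HasCompactSupport (fun x => ‖u x‖) :=
      hsupp.comp_left (g := fun z : ℂ => ‖z‖) norm_zero
    have h2 : HasCompactSupport (fun x => ‖u x‖ ^ (ρ - 1)) :=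
      hsupp.comp_left (g := fun z : ℂ => ‖z‖ ^ (ρ - 1))
        (by simp [Real.zero_rpow (by linarith : ρ - 1 ≠ 0)])
    have h3 : HasCompactSupport
        (fun x => (Complex.normSq (u x) + 1) ^ p * ‖u x‖
          + ‖u x‖ ^ (ρ - 1)) := by
      exact (HasCompactSupport.mul_left h1).add h2
    exact HasCompactSupport.mul_left h3
  have hBint : Integrable B volume := hBcont.integrable_of_hasCompactSupport hBsupp
  -- norm bound
  have hnorm : ∀ k : ℕ, ∀ x, ‖F k x‖ ≤ B x := by
    intro k x
    have hq : (0:ℝ) ≤ Complex.normSq (u x) + 1 / ((k:ℝ) + 1) :=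
      le_of_lt (add_pos_of_nonneg_of_pos (Complex.normSq_nonneg _) (hεpos k))
    have hnF : ‖F k x‖ = ‖lap u x‖
        * ((Complex.normSq (u x) + 1 / ((k:ℝ) + 1)) ^ p * ‖u x‖) := by
      simp only [hF, phiR, ← hp, norm_mul, norm_neg, Complex.norm_real, RCLike.norm_conj]
      rw [Real.norm_eq_abs, _root_.abs_of_nonneg (Real.rpow_nonneg hq p)]
    rw [hnF, hB]
    apply mul_le_mul_of_nonneg_left _ (norm_nonneg _)
    rcases le_or_gt 2 ρ with hcase | hcase
    · have hple : (Complex.normSq (u x) + 1 / ((k:ℝ) + 1)) ^ p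
          ≤ (Complex.normSq (u x) + 1) ^ p :=
        Real.rpow_le_rpow hq (by linarith [hεle k]) (by rw [hp]; linarith)
      have : (Complex.normSq (u x) + 1 / ((k:ℝ) + 1)) ^ p * ‖u x‖
          ≤ (Complex.normSq (u x) + 1) ^ p * ‖u x‖ :=
        mul_le_mul_of_nonneg_right hple (norm_nonneg _)
      have h4 : (0:ℝ) ≤ ‖u x‖ ^ (ρ - 1) :=
        Real.rpow_nonneg (norm_nonneg _) _
      linarith
    · by_cases hx : u x = 0
      · simp only [hx, map_zero, norm_zero]
        rw [Real.zero_rpow (by linarith : ρ - 1 ≠ 0)]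
        have h5 : (0:ℝ) ≤ (Complex.normSq (u x) + 1) ^ p * ‖u x‖ :=
          mul_nonneg (Real.rpow_nonneg (add_nonneg (Complex.normSq_nonneg _) zero_le_one) _)
            (norm_nonneg _)
        simpa [hx] using h5
      · have hS : (0:ℝ) < Complex.normSq (u x) := Complex.normSq_pos.mpr hx
        have hple : (Complex.normSq (u x) + 1 / ((k:ℝ) + 1)) ^ p
            ≤ (Complex.normSq (u x)) ^ p :=
          Real.rpow_le_rpow_of_nonpos hS (by linarith [hεpos k]) (by rw [hp]; linarith)
        have heq : (Complex.normSq (u x)) ^ p * ‖u x‖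
            = ‖u x‖ ^ (ρ - 1) := by
          rw [Complex.normSq_eq_norm_sq, ← Real.rpow_natCast (‖u x‖) 2,
            ← Real.rpow_mul (norm_nonneg _)]
          have h6 : ((2:ℕ):ℝ) * p = ρ - 2 := by rw [hp]; push_cast; ring
          rw [h6]
          nth_rewrite 2 [show ‖u x‖ = ‖u x‖ ^ (1:ℝ) from
            (Real.rpow_one _).symm]
          rw [← Real.rpow_add ((norm_pos_iff.mpr hx))]
          congr 1
          ring
        have h7 : (Complex.normSq (u x) + 1 / ((k:ℝ) + 1)) ^ p * ‖u x‖
            ≤ ‖u x‖ ^ (ρ - 1) := by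
          rw [← heq]
          exact mul_le_mul_of_nonneg_right hple (norm_nonneg _)
        have h8 : (0:ℝ) ≤ (Complex.normSq (u x) + 1) ^ p * ‖u x‖ :=
          mul_nonneg (Real.rpow_nonneg (add_nonneg (Complex.normSq_nonneg _) zero_le_one) _)
            (norm_nonneg _)
        linarith
  -- pointwise convergence
  have htendpt : ∀ x, Filter.Tendsto (fun k => F k x) Filter.atTop (nhds (f x)) := by
    intro x
    by_cases hx : u x = 0
    · have hFz : ∀ k, F k x = 0 := fun k => by simp [hF, phiR, hx]
      have hfz : f x = 0 := by simp [hf, hx]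
      simp only [hFz, hfz]
      exact tendsto_const_nhds
    · have hS : (0:ℝ) < Complex.normSq (u x) := Complex.normSq_pos.mpr hx
      set g : ℝ → ℂ := fun t =>
        (-(lap u x)) * (((Complex.normSq (u x) + t) ^ p : ℝ) : ℂ) * (starRingEnd ℂ) (u x)
        with hg
      have hgF : ∀ k : ℕ, F k x = g (1 / ((k:ℝ) + 1)) := fun k => by
        simp only [hF, hg, phiR, ← hp, mul_assoc]
      have hgf : f x = g 0 := by
        simp only [hf, hg, add_zero]
        congr 3
        rw [Complex.normSq_eq_norm_sq, ← Real.rpow_natCast (‖u x‖) 2,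
          ← Real.rpow_mul (norm_nonneg _)]
        congr 1
        rw [hp]; push_cast; ring
      have hgcont : ContinuousAt g 0 := by
        have h1 : ContinuousAt (fun t : ℝ => (Complex.normSq (u x) + t) ^ p) 0 := by
          have h2 : ContinuousAt (fun t : ℝ => Complex.normSq (u x) + t) 0 :=
            (continuous_const.add continuous_id).continuousAt
          have h3 : ContinuousAt (fun s : ℝ => s ^ p) (Complex.normSq (u x) + 0) :=
            Real.continuousAt_rpow_const _ _ (Or.inl (by rw [add_zero]; exact hS.ne'))
          exact h3.comp h2
        exact (continuousAt_const.mul (Complex.continuous_ofReal.continuousAt.comp h1)).mul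
          continuousAt_const
      have hto : Filter.Tendsto (fun k : ℕ => 1 / ((k:ℝ) + 1)) Filter.atTop (nhds 0) :=
        tendsto_one_div_add_atTop_nhds_zero_nat
      rw [hgf]
      simp only [hgF]
      exact (hgcont.tendsto).comp hto
  -- dominated convergence
  have hmeas : ∀ k : ℕ, AEStronglyMeasurable (F k) volume := fun k =>
    ((hlapcont.neg).mul
      (differentiable_phiR ρ _ (hεpos k) u hud).continuous).aestronglyMeasurable
  have hDCT : Filter.Tendsto (fun k => ∫ x, F k x) Filter.atTop (nhds (∫ x, f x)) :=
    tendsto_integral_of_dominated_convergence B hmeas hBint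
      (fun k => Filter.Eventually.of_forall (hnorm k))
      (Filter.Eventually.of_forall htendpt)
  have hre : Filter.Tendsto (fun k => (∫ x, F k x).re) Filter.atTop (nhds ((∫ x, f x).re)) :=
    (Complex.continuous_re.continuousAt.tendsto).comp hDCT
  have hk : ∀ k : ℕ, 0 ≤ (∫ x, F k x).re := fun k =>
    step1 ρ hρ u hu hsupp _ (hεpos k)
  exact ge_of_tendsto hre (Filter.Eventually.of_forall hk)
end
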